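/- Let M > 0 and let ψ ∈ L¹([0,+∞)) satisfy 0 ≤ ψ(x) ≤ M for all x ≥ 0 and x ↦ x·ψ(x) ∈ L¹([0,+∞)). Setting I = ∫₀^∞ ψ(x) dx, one has ∫₀^∞ x·ψ(x) dx ≥ I²/(2M). -/

import Mathlib

open MeasureTheory Set

theorem integral_x_mul_ge_sq_div (M : ℝ) (hM : 0 < M) (ψ : ℝ → ℝ)
    (hψ : IntegrableOn ψ (Ici 0))
    (hxψ : IntegrableOn (fun x => x * ψ x) (Ici 0))
    (hbound : ∀ x, 0 ≤ x → 0 ≤ ψ x ∧ ψ x ≤ M)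
    (I : ℝ) (hI : I = ∫ x in Ici (0:ℝ), ψ x) :
    I ^ 2 / (2 * M) ≤ ∫ x in Ici (0:ℝ), x * ψ x := by
  set a := I / M with ha_def
  have hI0 : 0 ≤ I := by
    rw [hI]
    exact setIntegral_nonneg measurableSet_Ici (fun x hx => (hbound x hx).1)
  have ha : 0 ≤ a := div_nonneg hI0 hM.le
  have hmax_cont : Continuous fun x : ℝ => max (a - x) 0 :=
    (continuous_const.sub continuous_id).max continuous_const
  have hmax_int : IntegrableOn (fun x : ℝ => max (a - x) 0) (Ici 0) := by
    have h1 : IntegrableOn (fun x : ℝ => max (a - x) 0) (Icc 0 a) :=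
      hmax_cont.continuousOn.integrableOn_compact isCompact_Icc
    have h2 : IntegrableOn (fun x : ℝ => max (a - x) 0) (Ici a) := by
      have heq : EqOn (fun x : ℝ => max (a - x) 0) 0 (Ici a) := by
        intro x hx
        simp [max_eq_right (sub_nonpos.mpr (mem_Ici.mp hx))]
      exact (integrableOn_congr_fun heq measurableSet_Ici).mpr integrableOn_zero
    exact (h1.union h2).mono_set (fun x hx => by
      rcases le_total x a with h | h
      · exact Or.inl ⟨hx, h⟩
      · exact Or.inr h)
  have hg_int : IntegrableOn (fun x : ℝ => a * ψ x - M * max (a - x) 0) (Ici 0) :=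
    (hψ.const_mul a).sub (hmax_int.const_mul M)
  have hle : ∫ x in Ici (0:ℝ), (a * ψ x - M * max (a - x) 0) ≤ ∫ x in Ici (0:ℝ), x * ψ x := by
    apply setIntegral_mono_on hg_int hxψ measurableSet_Ici
    intro x hx
    have hx0 : (0:ℝ) ≤ x := hx
    obtain ⟨h1, h2⟩ := hbound x hx0
    rcases le_total x a with h | h
    · rw [max_eq_left (sub_nonneg.mpr h)]
      nlinarith [mul_nonneg (sub_nonneg.mpr h) (sub_nonneg.mpr h2)]
    · rw [max_eq_right (sub_nonpos.mpr h)]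
      nlinarith [mul_nonneg (sub_nonneg.mpr h) h1]
  have hmax_val : ∫ x in Ici (0:ℝ), max (a - x) 0 = a ^ 2 / 2 := by
    rw [integral_Ici_eq_integral_Ioi, ← Ioc_union_Ioi_eq_Ioi ha,
      setIntegral_union (Ioc_disjoint_Ioi le_rfl) measurableSet_Ioi
        (hmax_int.mono_set (Ioc_subset_Icc_self.trans Icc_subset_Ici_self))
        (hmax_int.mono_set (fun x hx => le_trans ha (le_of_lt hx)))]
    have e1 : ∫ x in Ioc (0:ℝ) a, max (a - x) 0 = ∫ x in Ioc (0:ℝ) a, (a - x) := by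
      apply setIntegral_congr_fun measurableSet_Ioc
      intro x hx
      exact max_eq_left (sub_nonneg.mpr hx.2)
    have e2 : ∫ x in Ioi a, max (a - x) 0 = 0 := by
      rw [setIntegral_congr_fun measurableSet_Ioi
        (fun x hx => max_eq_right (sub_nonpos.mpr (le_of_lt hx)))]
      simp
    rw [e1, e2, ← intervalIntegral.integral_of_le ha]
    have : ∫ x in (0:ℝ)..a, (a - x) = a ^ 2 / 2 := by
      rw [intervalIntegral.integral_sub intervalIntegrable_const
        intervalIntegral.intervalIntegrable_id]
      simp
      ring
    rw [this]; ring
  have hsplit : ∫ x in Ici (0:ℝ), (a * ψ x - M * max (a - x) 0)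
      = a * I - M * (a ^ 2 / 2) := by
    rw [integral_sub (hψ.const_mul a) (hmax_int.const_mul M),
      integral_const_mul, integral_const_mul, hmax_val, ← hI]
  rw [hsplit] at hle
  have heq : a * I - M * (a ^ 2 / 2) = I ^ 2 / (2 * M) := by
    rw [ha_def]; field_simp; ring
  linarith [heq ▸ hle]
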